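/- When a change of smoothing at one crossing merges two state circles into one, the merge of two d-circles or of two h-circles always produces a d-circle, and the merge of a d-circle with an h-circle always produces an h-circle. (Arithmetically: if the merged circle has b₁ + b₂ ± 2 break points where b₁, b₂ are the break-point numbers of the two circles, then half of its break-point number is even iff exactly one of b₁/2, b₂/2 is odd.) For closed braids, under the identification of d-circles with contractible circles and h-circles with non-contractible circles in the solid torus, these merging rules coincide with the merging rules for the annulus of Asaeda–Przytycki–Sikora. -/

import Mathlib

/-!
STATEMENT 11: When a change of smoothing merges two state circles, two d-circles or two
h-circles always merge into a d-circle, and a d-circle with an h-circle always merges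
into an h-circle (arithmetically: if the merged circle has b₁ + b₂ ± 2 break points then
half of its break-point number is even iff exactly one of b₁/2, b₂/2 is odd). For closed
braids, under the identification of d-circles with contractible circles, these merging
rules coincide with the merging rules for the annulus of Asaeda–Przytycki–Sikora.
-/

/-- State circles of a Kauffman state of a closed braid diagram:
* `breaks c` is the (even) number of break points on the circle `c`; a circle is of
  type d if `breaks c / 2` is odd and of type h otherwise;
* `contractible c` means `c` is contractible in the solid torus;
* `Merge c₁ c₂ c` means that changing the smoothing at a crossing merges the two
  distinct state circles `c₁`, `c₂` into the single circle `c`; this changes the total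
  number of break points by 2 (field `merge_breaks`);
* `contractible_iff` is the identification of d-circles with contractible circles (and
  hence of h-circles with non-contractible circles) for closed braids. -/
structure MergeSetting where
  Circle : Type
  breaks : Circle → ℕ
  breaks_even : ∀ c, Even (breaks c)
  contractible : Circle → Prop
  Merge : Circle → Circle → Circle → Prop
  merge_breaks : ∀ {c₁ c₂ c}, Merge c₁ c₂ c →
    breaks c = breaks c₁ + breaks c₂ + 2 ∨ breaks c + 2 = breaks c₁ + breaks c₂
  contractible_iff : ∀ c, contractible c ↔ Odd (breaks c / 2)

theorem merging_rules (M : MergeSetting) :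
    -- merging rules: d·d ↦ d, h·h ↦ d, d·h ↦ h
    (∀ c₁ c₂ c, M.Merge c₁ c₂ c →
      (Odd (M.breaks c / 2) ↔ (Odd (M.breaks c₁ / 2) ↔ Odd (M.breaks c₂ / 2))))
    -- the arithmetic form
    ∧ (∀ b₁ b₂ b : ℕ, Even b₁ → Even b₂ →
        (b = b₁ + b₂ + 2 ∨ b + 2 = b₁ + b₂) →
        (Even (b / 2) ↔ Xor' (Odd (b₁ / 2)) (Odd (b₂ / 2))))
    -- coincidence with the Asaeda–Przytycki–Sikora merging rules for the annulus
    ∧ (∀ c₁ c₂ c, M.Merge c₁ c₂ c →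
        (M.contractible c ↔ (M.contractible c₁ ↔ M.contractible c₂))) := by
  have key : ∀ c₁ c₂ c, M.Merge c₁ c₂ c →
      (Odd (M.breaks c / 2) ↔ (Odd (M.breaks c₁ / 2) ↔ Odd (M.breaks c₂ / 2))) := by
    intro c₁ c₂ c h
    have h1 := M.breaks_even c₁
    have h2 := M.breaks_even c₂
    have hb := M.merge_breaks h
    rw [Nat.even_iff] at h1 h2
    simp only [Nat.odd_iff]
    omega
  refine ⟨key, ?_, ?_⟩
  · intro b₁ b₂ b h1 h2 hb
    rw [Nat.even_iff] at h1 h2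
    simp only [Nat.even_iff, Nat.odd_iff, Xor', Xor]
    omega
  · intro c₁ c₂ c h
    simp only [M.contractible_iff]
    exact key c₁ c₂ c h
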